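/- Let (M, ·, e) be a monoid and W the writer monad on Set, WX := M × X. For any Set monad U, let ω^U : WU ⇒ UW be the distributive law defined by ω^U_X(m, u) := U(x ↦ (m,x))(u) for (m,u) ∈ M × UX. Then for any monads S, T on Set and ANY natural transformation λ : TS ⇒ ST, the Yang–Baxter equation λW ∘ Tω^S ∘ ω^T S = Sω^T ∘ ω^S T ∘ Wλ holds. -/

import Mathlib

open CategoryTheory

universe u

/-- The distributive law `ω^U : WU ⇒ UW` of the writer monad `W` (with
`WX = M × X` for a monoid `M`) over a `Set`-monad `U`:
`ω^U_X(m, u) = U(x ↦ (m, x))(u)`. -/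
def omegaLaw (M : Type u) (U : Monad (Type u)) (X : Type u) :
    M × U.obj X → U.obj (M × X) :=
  fun p => U.map (TypeCat.ofHom (fun x : X => (p.1, x))) p.2

/-- Proposition 4.12. For a monoid `M`, any monads `S`, `T` on
`Set` and any natural transformation `λ : TS ⇒ ST`, the Yang–Baxter equation
`λW ∘ Tω^S ∘ ω^T S = Sω^T ∘ ω^S T ∘ Wλ` holds. -/
theorem yb_writer (M : Type u) [Monoid M] (S T : Monad (Type u))
    (l : (S.toFunctor ⋙ T.toFunctor) ⟶ (T.toFunctor ⋙ S.toFunctor)) :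
    ∀ X : Type u,
      TypeCat.ofHom (omegaLaw M T (S.obj X)) ≫ T.map (TypeCat.ofHom (omegaLaw M S X)) ≫ l.app (M × X) =
      TypeCat.ofHom (fun p : M × T.obj (S.obj X) => (p.1, l.app X p.2)) ≫
        TypeCat.ofHom (omegaLaw M S (T.obj X)) ≫ S.map (TypeCat.ofHom (omegaLaw M T X)) := by
  intro X
  ext ⟨m, u⟩
  have h := congr_arg (fun f => f u) (l.naturality (X := X) (Y := M × X) (TypeCat.ofHom (fun x => (m, x))))
  simp only [TypeCat.Fun.toFun_apply, types_comp_apply, TypeCat.ofHom_apply, omegaLaw, Functor.comp_map] at h ⊢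
  rw [← FunctorToTypes.map_comp_apply, ← FunctorToTypes.map_comp_apply]
  exact h
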